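/- For any positive integer k and any election (C,V), the k-block decomposition of (C,V) containing the maximum number of blocks is unique. -/

import Mathlib

noncomputable section

/-- The interval of positions `[i,j]` (0-indexed) is a block in the election whose votes
are the rankings `vote v : C ≃ Fin |C|` (position `0` is the most preferred):
the set of candidates occupying a position in `[i,j]` in some vote has exactly
`j - i + 1` elements (hence it is the same set of candidates in every vote). -/
def IsBlock {C V : Type*} [Fintype C] (vote : V → C ≃ Fin (Fintype.card C))
    (i j : ℕ) : Prop :=
  i ≤ j ∧ j < Fintype.card C ∧
    Set.ncard {c : C | ∃ v : V, (vote v c : ℕ) ∈ Set.Icc i j} = j - i + 1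

/-- A `k`-block decomposition: a nonempty sequence of blocks, each of size at most `k`,
which are consecutive, and whose last block is a tail block (ends at the last position). -/
def IsKBlockDecomp {C V : Type*} [Fintype C] (vote : V → C ≃ Fin (Fintype.card C))
    (k : ℕ) (L : List (ℕ × ℕ)) : Prop :=
  L ≠ [] ∧
  (∀ p ∈ L, IsBlock vote p.1 p.2 ∧ p.2 + 1 - p.1 ≤ k) ∧
  List.Chain' (fun p q => p.2 + 1 = q.1) L ∧
  (∀ p, L.getLast? = some p → p.2 + 1 = Fintype.card C)

namespace Stmt5Aux

variable {C V : Type*} [Fintype C] (vote : V → C ≃ Fin (Fintype.card C))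

lemma posSet_ncard (i j : ℕ) (hij : i ≤ j) (hj : j < Fintype.card C) (v : V) :
    Set.ncard {c : C | (vote v c : ℕ) ∈ Set.Icc i j} = j - i + 1 := by
  have h1 : {c : C | (vote v c : ℕ) ∈ Set.Icc i j}
      = (vote v) ⁻¹' (Fin.val ⁻¹' Set.Icc i j) := rfl
  have h2 : ((vote v) ⁻¹' (Fin.val ⁻¹' Set.Icc i j)).ncard
      = ((vote v) '' ((vote v) ⁻¹' (Fin.val ⁻¹' Set.Icc i j))).ncard :=
    (Set.ncard_image_of_injective _ (vote v).injective).symm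
  have h3 : (vote v) '' ((vote v) ⁻¹' (Fin.val ⁻¹' Set.Icc i j))
      = (Fin.val ⁻¹' Set.Icc i j : Set (Fin (Fintype.card C))) :=
    Set.image_preimage_eq _ (vote v).surjective
  have h4 : ((Fin.val ⁻¹' Set.Icc i j : Set (Fin (Fintype.card C)))).ncard
      = (Fin.val '' (Fin.val ⁻¹' Set.Icc i j : Set (Fin (Fintype.card C)))).ncard :=
    (Set.ncard_image_of_injective _ Fin.val_injective).symm
  have h5 : Fin.val '' (Fin.val ⁻¹' Set.Icc i j : Set (Fin (Fintype.card C)))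
      = Set.Icc i j := by
    rw [Set.image_preimage_eq_inter_range]
    apply Set.inter_eq_self_of_subset_left
    intro x hx
    exact ⟨⟨x, lt_of_le_of_lt hx.2 hj⟩, rfl⟩
  have h6 : (Set.Icc i j).ncard = j - i + 1 := by
    rw [← Finset.coe_Icc, Set.ncard_coe_finset, Nat.card_Icc]
    omega
  rw [h1, h2, h3, h4, h5, h6]

lemma block_set_eq {i j : ℕ} (h : IsBlock vote i j) (v : V) :
    {c : C | (vote v c : ℕ) ∈ Set.Icc i j}
      = {c : C | ∃ w : V, (vote w c : ℕ) ∈ Set.Icc i j} := by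
  obtain ⟨hij, hj, hcard⟩ := h
  apply Set.eq_of_subset_of_ncard_le (ht := Set.toFinite _)
  · intro x hx; exact ⟨v, hx⟩
  · rw [hcard, posSet_ncard vote i j hij hj v]

lemma diff_block {a c m : ℕ} (ham : IsBlock vote a m) (hcm : IsBlock vote c m)
    (hac : a < c) : IsBlock vote a (c - 1) := by
  have hcmle : c ≤ m := hcm.1
  have hmlt : m < Fintype.card C := ham.2.1
  have hV : Nonempty V := by
    by_contra hV
    rw [not_nonempty_iff] at hV
    have hemp : {x : C | ∃ v : V, (vote v x : ℕ) ∈ Set.Icc a m} = ∅ := by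
      ext x; simp [hV.false]
    have h := ham.2.2
    rw [hemp, Set.ncard_empty] at h
    omega
  obtain ⟨v⟩ := hV
  have key : {x : C | ∃ w : V, (vote w x : ℕ) ∈ Set.Icc a (c - 1)}
      = {x : C | ∃ w : V, (vote w x : ℕ) ∈ Set.Icc a m}
        \ {x : C | ∃ w : V, (vote w x : ℕ) ∈ Set.Icc c m} := by
    ext x
    simp only [Set.mem_diff, Set.mem_setOf_eq, Set.mem_Icc]
    constructor
    · rintro ⟨w, hw1, hw2⟩
      refine ⟨⟨w, hw1, by omega⟩, ?_⟩
      intro hx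
      have hx' : x ∈ {y : C | (vote w y : ℕ) ∈ Set.Icc c m} := by
        rw [block_set_eq vote hcm w]; exact hx
      simp only [Set.mem_setOf_eq, Set.mem_Icc] at hx'
      omega
    · rintro ⟨hxa, hxc⟩
      have hxa' : x ∈ {y : C | (vote v y : ℕ) ∈ Set.Icc a m} := by
        rw [block_set_eq vote ham v]; exact hxa
      have hxc' : x ∉ {y : C | (vote v y : ℕ) ∈ Set.Icc c m} := by
        rw [block_set_eq vote hcm v]; exact hxc
      simp only [Set.mem_setOf_eq, Set.mem_Icc] at hxa' hxc'
      exact ⟨v, hxa'.1, by omega⟩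
  have hsub : {x : C | ∃ w : V, (vote w x : ℕ) ∈ Set.Icc c m}
      ⊆ {x : C | ∃ w : V, (vote w x : ℕ) ∈ Set.Icc a m} := by
    rintro x ⟨w, hw⟩
    simp only [Set.mem_Icc] at hw
    exact ⟨w, by simp only [Set.mem_Icc]; omega⟩
  refine ⟨by omega, by omega, ?_⟩
  rw [key, Set.ncard_diff hsub, ham.2.2, hcm.2.2]
  omega

/-- Decomposition ending at position `e - 1` (i.e. last block `p` has `p.2 + 1 = e`). -/
def D (k e : ℕ) (L : List (ℕ × ℕ)) : Prop :=
  L ≠ [] ∧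
  (∀ p ∈ L, IsBlock vote p.1 p.2 ∧ p.2 + 1 - p.1 ≤ k) ∧
  List.Chain' (fun p q => p.2 + 1 = q.1) L ∧
  (∀ p, L.getLast? = some p → p.2 + 1 = e)

lemma getLast?_append_singleton {α : Type*} (l : List α) (x : α) :
    (l ++ [x]).getLast? = some x := by
  simp [List.getLast?_append]

lemma refute_lt {k e : ℕ} {T₁ T₂ : List (ℕ × ℕ)} {a c m : ℕ}
    (h₁ : D vote k e (T₁ ++ [(a, m)])) (h₂ : D vote k e (T₂ ++ [(c, m)]))
    (hmax₁ : ∀ L, D vote k e L → L.length ≤ (T₁ ++ [(a, m)]).length)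
    (hac : a < c) : False := by
  obtain ⟨-, hb₁, hc₁, hl₁⟩ := h₁
  obtain ⟨-, hb₂, -, -⟩ := h₂
  have ham : IsBlock vote a m ∧ m + 1 - a ≤ k := hb₁ (a, m) (by simp)
  have hcm : IsBlock vote c m ∧ m + 1 - c ≤ k := hb₂ (c, m) (by simp)
  have hdiff : IsBlock vote a (c - 1) := diff_block vote ham.1 hcm.1 hac
  have hcmle : c ≤ m := hcm.1.1
  have hsz : m + 1 - a ≤ k := ham.2
  have hD : D vote k e (T₁ ++ [(a, c - 1), (c, m)]) := by
    refine ⟨by simp, ?_, ?_, ?_⟩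
    · intro p hp
      rw [List.mem_append] at hp
      rcases hp with hp | hp
      · exact hb₁ p (by simp [hp])
      · simp only [List.mem_cons, List.mem_singleton] at hp
        rcases hp with hp | hp
        · subst hp; exact ⟨hdiff, by omega⟩
        · simp at hp; subst hp; exact hcm
    · simp only [List.Chain'] at hc₁ ⊢
      rw [List.isChain_append] at hc₁ ⊢
      refine ⟨hc₁.1, ?_, ?_⟩
      · refine List.isChain_cons_cons.2 ⟨by simp; omega, List.isChain_singleton _⟩
      · intro x hx y hy
        simp only [List.head?_cons, Option.mem_some_iff] at hy
        subst hy
        exact hc₁.2.2 x hx (a, m) (by simp)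
    · intro p hp
      have hlast : (T₁ ++ [(a, c - 1), (c, m)]).getLast? = some (c, m) := by
        have : T₁ ++ [(a, c - 1), (c, m)] = (T₁ ++ [(a, c - 1)]) ++ [(c, m)] := by simp
        rw [this, getLast?_append_singleton]
      rw [hlast, Option.some_inj] at hp
      subst hp
      exact hl₁ (a, m) (getLast?_append_singleton _ _)
  have hlen := hmax₁ _ hD
  simp at hlen

lemma key {k : ℕ} : ∀ N e (L₁ L₂ : List (ℕ × ℕ)), L₁.length ≤ N →
    D vote k e L₁ → D vote k e L₂ →
    (∀ L, D vote k e L → L.length ≤ L₁.length) →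
    (∀ L, D vote k e L → L.length ≤ L₂.length) → L₁ = L₂ := by
  intro N
  induction N with
  | zero =>
    intro e L₁ L₂ hN h₁ _ _ _
    exact absurd (List.length_eq_zero_iff.1 (Nat.le_zero.1 hN)) h₁.1
  | succ N ih =>
    intro e L₁ L₂ hN h₁ h₂ hmax₁ hmax₂
    rcases L₁.eq_nil_or_concat with rfl | ⟨T₁, ⟨a, b⟩, rfl⟩
    · exact absurd rfl h₁.1
    rcases L₂.eq_nil_or_concat with rfl | ⟨T₂, ⟨c, d⟩, rfl⟩
    · exact absurd rfl h₂.1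
    simp only [List.concat_eq_append] at *
    have hb : b + 1 = e := h₁.2.2.2 (a, b) (getLast?_append_singleton _ _)
    have hd : d + 1 = e := h₂.2.2.2 (c, d) (getLast?_append_singleton _ _)
    have hbd : b = d := by omega
    subst hbd
    have hac : a = c := by
      by_contra hne
      rcases Nat.lt_or_ge a c with h | h
      · exact refute_lt vote h₁ h₂ hmax₁ h
      · exact refute_lt vote h₂ h₁ hmax₂ (by omega)
    subst hac
    -- now L₁ = T₁ ++ [(a,b)], L₂ = T₂ ++ [(a,b)]
    rcases List.eq_nil_or_concat T₁ with rfl | hT₁ne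
    · -- L₁ = [(a,b)], so L₂ has length ≤ 1, hence T₂ = []
      have hlen := hmax₁ _ h₂
      simp only [List.length_append, List.length_cons, List.length_nil] at hlen
      have hT : T₂ = [] := List.length_eq_zero_iff.1 (by omega)
      rw [hT]
    rcases List.eq_nil_or_concat T₂ with rfl | hT₂ne
    · have hlen := hmax₂ _ h₁
      simp only [List.length_append, List.length_cons, List.length_nil] at hlen
      have hT : T₁ = [] := List.length_eq_zero_iff.1 (by omega)
      rw [hT]
    have hT₁ : T₁ ≠ [] := by rcases hT₁ne with ⟨l, x, rfl⟩; simp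
    have hT₂ : T₂ ≠ [] := by rcases hT₂ne with ⟨l, x, rfl⟩; simp
    -- strip the common last block; the tails are decompositions ending at a
    have tailD : ∀ T : List (ℕ × ℕ), T ≠ [] → D vote k e (T ++ [(a, b)]) →
        D vote k a T := by
      intro T hTne hT
      obtain ⟨-, hbT, hcT, -⟩ := hT
      simp only [List.Chain'] at hcT
      rw [List.isChain_append] at hcT
      refine ⟨hTne, fun p hp => hbT p (by simp [hp]), hcT.1, ?_⟩
      intro p hp
      have := hcT.2.2 p hp (a, b) (by simp)
      omega
    have tailMax : ∀ T : List (ℕ × ℕ), D vote k e (T ++ [(a, b)]) →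
        (∀ L, D vote k e L → L.length ≤ (T ++ [(a, b)]).length) →
        (∀ L, D vote k a L → L.length ≤ T.length) := by
      intro T hT hmaxT L hL
      have hab : IsBlock vote a b ∧ b + 1 - a ≤ k :=
        hT.2.1 (a, b) (by simp)
      have hLD : D vote k e (L ++ [(a, b)]) := by
        obtain ⟨hLne, hbL, hcL, hlL⟩ := hL
        refine ⟨by simp, ?_, ?_, ?_⟩
        · intro p hp
          rw [List.mem_append] at hp
          rcases hp with hp | hp
          · exact hbL p hp
          · simp at hp; subst hp; exact hab
        · simp only [List.Chain']
          rw [List.isChain_append]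
          refine ⟨hcL, List.isChain_singleton _, ?_⟩
          intro x hx y hy
          simp only [List.head?_cons, Option.mem_some_iff] at hy
          subst hy
          exact hlL x hx
        · intro p hp
          rw [getLast?_append_singleton, Option.some_inj] at hp
          subst hp
          exact hT.2.2.2 (a, b) (getLast?_append_singleton _ _)
      have := hmaxT _ hLD
      simp at this
      omega
    have hTeq : T₁ = T₂ := by
      apply ih a T₁ T₂
      · have : (T₁ ++ [(a, b)]).length ≤ N + 1 := hN
        simp at this ⊢
        omega
      · exact tailD T₁ hT₁ h₁
      · exact tailD T₂ hT₂ h₂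
      · exact tailMax T₁ h₁ hmax₁
      · exact tailMax T₂ h₂ hmax₂
    rw [hTeq]

end Stmt5Aux

/-- for any positive integer `k` and any election, the `k`-block
decomposition containing the maximum number of blocks is unique. -/
theorem stmt_5 {C V : Type*} [Fintype C] (vote : V → C ≃ Fin (Fintype.card C))
    (k : ℕ) (hk : 0 < k) (L₁ L₂ : List (ℕ × ℕ))
    (h₁ : IsKBlockDecomp vote k L₁) (h₂ : IsKBlockDecomp vote k L₂)
    (hmax₁ : ∀ L, IsKBlockDecomp vote k L → L.length ≤ L₁.length)
    (hmax₂ : ∀ L, IsKBlockDecomp vote k L → L.length ≤ L₂.length) :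
    L₁ = L₂ := by
  have hiff : ∀ L, IsKBlockDecomp vote k L ↔ Stmt5Aux.D vote k (Fintype.card C) L := by
    intro L; rfl
  rw [hiff] at h₁ h₂
  simp only [hiff] at hmax₁ hmax₂
  exact Stmt5Aux.key vote L₁.length (Fintype.card C) L₁ L₂ le_rfl h₁ h₂ hmax₁ hmax₂
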